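/- For any valuation v of the propositional variables, a formula A is true under v if and only if there exists a clique L of A such that every leaf in L is labelled by a literal true under v. -/
import Mathlib


/-- Literals: propositional variables and their negations. -/
inductive Lit where
  | pos : Nat → Lit
  | neg : Nat → Lit
deriving DecidableEq

/-- Formulas of classical propositional logic, built from literals by binary ∧ and ∨. -/
inductive Formula where
  | lit : Lit → Formula
  | and : Formula → Formula → Formula
  | or  : Formula → Formula → Formula

/-- Leaves of the parse tree, identified by their positions (paths: `false` = left,
`true` = right). -/
def Formula.leaves : Formula → Set (List Bool)
  | .lit _ => {[]}
  | .and A B => (fun p => false :: p) '' A.leaves ∪ (fun p => true :: p) '' B.leaves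
  | .or A B  => (fun p => false :: p) '' A.leaves ∪ (fun p => true :: p) '' B.leaves

/-- The literal labelling the leaf at a given path, if any. -/
def Formula.labelAt : Formula → List Bool → Option Lit
  | .lit l, [] => some l
  | .and A B, b :: p => if b then B.labelAt p else A.labelAt p
  | .or A B, b :: p => if b then B.labelAt p else A.labelAt p
  | _, _ => none

/-- ∨-resolutions of a formula: delete one argument subtree at each ∨-vertex. -/
inductive Res : Formula → Type where
  | lit : (l : Lit) → Res (.lit l)
  | and : {A B : Formula} → Res A → Res B → Res (.and A B)
  | orL : {A B : Formula} → Res A → Res (.or A B)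
  | orR : {A B : Formula} → Res B → Res (.or A B)

/-- The set of leaves of `A` retained by an ∨-resolution. -/
def Res.leafSet : {A : Formula} → Res A → Set (List Bool)
  | _, .lit _ => {[]}
  | _, .and ra rb => (fun p => false :: p) '' ra.leafSet ∪ (fun p => true :: p) '' rb.leafSet
  | _, .orL ra => (fun p => false :: p) '' ra.leafSet
  | _, .orR rb => (fun p => true :: p) '' rb.leafSet

/-- Cliques: leaf sets of ∨-resolutions. -/
def Formula.cliques (A : Formula) : Set (Set (List Bool)) :=
  {L | ∃ r : Res A, r.leafSet = L}

/-- ∧-resolutions of a formula: delete one argument subtree at each ∧-vertex. -/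
inductive CoRes : Formula → Type where
  | lit : (l : Lit) → CoRes (.lit l)
  | or : {A B : Formula} → CoRes A → CoRes B → CoRes (.or A B)
  | andL : {A B : Formula} → CoRes A → CoRes (.and A B)
  | andR : {A B : Formula} → CoRes B → CoRes (.and A B)

/-- The set of leaves of `A` retained by an ∧-resolution. -/
def CoRes.leafSet : {A : Formula} → CoRes A → Set (List Bool)
  | _, .lit _ => {[]}
  | _, .or ra rb => (fun p => false :: p) '' ra.leafSet ∪ (fun p => true :: p) '' rb.leafSet
  | _, .andL ra => (fun p => false :: p) '' ra.leafSet
  | _, .andR rb => (fun p => true :: p) '' rb.leafSet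

/-- Co-cliques: leaf sets of ∧-resolutions. -/
def Formula.cocliques (A : Formula) : Set (Set (List Bool)) :=
  {M | ∃ r : CoRes A, r.leafSet = M}

/-- Truth of a literal under a valuation. -/
def Lit.eval (v : Nat → Bool) : Lit → Bool
  | .pos n => v n
  | .neg n => !(v n)

/-- Standard Boolean semantics. -/
def Formula.eval (v : Nat → Bool) : Formula → Bool
  | .lit l => l.eval v
  | .and A B => A.eval v && B.eval v
  | .or A B => A.eval v || B.eval v

/-- Number of ∨-vertices in the parse tree. -/
def Formula.orCount : Formula → Nat
  | .lit _ => 0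
  | .and A B => A.orCount + B.orCount
  | .or A B => A.orCount + B.orCount + 1

/-- Number of ∧-vertices in the parse tree. -/
def Formula.andCount : Formula → Nat
  | .lit _ => 0
  | .and A B => A.andCount + B.andCount + 1
  | .or A B => A.andCount + B.andCount

/-- Complement of a literal. -/
def Lit.compl : Lit → Lit
  | .pos n => .neg n
  | .neg n => .pos n

/-- De Morgan dual: swap ∧ with ∨ and negate every literal. -/
def Formula.dual : Formula → Formula
  | .lit l => .lit l.compl
  | .and A B => .or A.dual B.dual
  | .or A B => .and A.dual B.dual

lemma eval_true_iff_res (A : Formula) (v : Nat → Bool) :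
    A.eval v = true ↔
      ∃ r : Res A, ∀ p ∈ r.leafSet, ∃ l, A.labelAt p = some l ∧ l.eval v = true := by
  induction A with
  | lit l =>
    simp only [Formula.eval]
    constructor
    · intro h
      exact ⟨.lit l, fun p hp => by
        rcases hp with rfl
        exact ⟨l, rfl, h⟩⟩
    · rintro ⟨r, hr⟩
      obtain ⟨l', hl', hev⟩ := hr [] (by cases r; exact rfl)
      cases hl'; exact hev
  | and A B ihA ihB =>
    simp only [Formula.eval, Bool.and_eq_true, ihA, ihB]
    constructor
    · rintro ⟨⟨ra, ha⟩, ⟨rb, hb⟩⟩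
      refine ⟨.and ra rb, fun p hp => ?_⟩
      rcases hp with ⟨q, hq, rfl⟩ | ⟨q, hq, rfl⟩
      · obtain ⟨l, hl, hev⟩ := ha q hq
        exact ⟨l, by simpa [Formula.labelAt] using hl, hev⟩
      · obtain ⟨l, hl, hev⟩ := hb q hq
        exact ⟨l, by simpa [Formula.labelAt] using hl, hev⟩
    · rintro ⟨r, hr⟩
      cases r with
      | and ra rb =>
        refine ⟨⟨ra, fun q hq => ?_⟩, ⟨rb, fun q hq => ?_⟩⟩
        · obtain ⟨l, hl, hev⟩ := hr (false :: q) (Or.inl ⟨q, hq, rfl⟩)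
          exact ⟨l, by simpa [Formula.labelAt] using hl, hev⟩
        · obtain ⟨l, hl, hev⟩ := hr (true :: q) (Or.inr ⟨q, hq, rfl⟩)
          exact ⟨l, by simpa [Formula.labelAt] using hl, hev⟩
  | or A B ihA ihB =>
    simp only [Formula.eval, Bool.or_eq_true, ihA, ihB]
    constructor
    · rintro (⟨ra, ha⟩ | ⟨rb, hb⟩)
      · refine ⟨.orL ra, fun p hp => ?_⟩
        rcases hp with ⟨q, hq, rfl⟩
        obtain ⟨l, hl, hev⟩ := ha q hq
        exact ⟨l, by simpa [Formula.labelAt] using hl, hev⟩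
      · refine ⟨.orR rb, fun p hp => ?_⟩
        rcases hp with ⟨q, hq, rfl⟩
        obtain ⟨l, hl, hev⟩ := hb q hq
        exact ⟨l, by simpa [Formula.labelAt] using hl, hev⟩
    · rintro ⟨r, hr⟩
      cases r with
      | orL ra =>
        refine Or.inl ⟨ra, fun q hq => ?_⟩
        obtain ⟨l, hl, hev⟩ := hr (false :: q) ⟨q, hq, rfl⟩
        exact ⟨l, by simpa [Formula.labelAt] using hl, hev⟩
      | orR rb =>
        refine Or.inr ⟨rb, fun q hq => ?_⟩
        obtain ⟨l, hl, hev⟩ := hr (true :: q) ⟨q, hq, rfl⟩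
        exact ⟨l, by simpa [Formula.labelAt] using hl, hev⟩

theorem eval_true_iff_clique (A : Formula) (v : Nat → Bool) :
    A.eval v = true ↔
      ∃ L ∈ A.cliques, ∀ p ∈ L, ∃ l, A.labelAt p = some l ∧ l.eval v = true := by
  rw [eval_true_iff_res]
  constructor
  · rintro ⟨r, hr⟩
    exact ⟨r.leafSet, ⟨r, rfl⟩, hr⟩
  · rintro ⟨L, ⟨r, rfl⟩, hL⟩
    exact ⟨r, hL⟩
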